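/- Let N and L be positive integers and let e_0, …, e_{L−1} ∈ ℂ^N be envelopes. Then the Enveloped Sinusoid synthesis operation over the time-shift index can be computed in the Fourier domain by a frequency-shifted convolution: for every coefficient vector c ∈ ℂ^N, every l ∈ {0, …, L−1}, every k ∈ {0, …, N−1}, and every n ∈ {0, …, N−1}, Σ_{m=0}^{N−1} c[m]·a_{l,k,m}[n] = (1/N)·Σ_{f=0}^{N−1} DFT(c)[f]·DFT(e_l)[(f−k) mod N]·exp(2πi·f·n/N). -/

import Mathlib

open scoped BigOperators
open Finset

/-- Inner product on ℂ^N: ⟨v, w⟩ = Σ_n v[n]·conj(w[n]). -/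
noncomputable def cInner {N : ℕ} (v w : Fin N → ℂ) : ℂ :=
  ∑ n, v n * (starRingEnd ℂ) (w n)

/-- Norm on ℂ^N: ‖v‖ = ⟨v, v⟩^(1/2) = (Σ_n |v[n]|²)^(1/2). -/
noncomputable def cNorm {N : ℕ} (v : Fin N → ℂ) : ℝ :=
  Real.sqrt (∑ n, ‖v n‖ ^ 2)

/-- Enveloped Sinusoid frame vector:
    a_{e,k,m}[n] = e[(n−m) mod N]·exp(2πi·k·(n−m)/N).
    (Fin subtraction `n - m` is subtraction mod N.) -/
noncomputable def espVec {N : ℕ} (e : Fin N → ℂ) (k m : Fin N) : Fin N → ℂ :=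
  fun n => e (n - m) *
    Complex.exp (2 * Real.pi * Complex.I * ((k : ℕ) : ℂ) *
      (((((n : ℕ) : ℤ) - ((m : ℕ) : ℤ)) : ℤ) : ℂ) / ((N : ℕ) : ℂ))

/-- The (non-unitary) discrete Fourier transform:
    DFT(v)[f] = Σ_n v[n]·exp(−2πi·f·n/N). -/
noncomputable def dft {N : ℕ} (v : Fin N → ℂ) : Fin N → ℂ :=
  fun f => ∑ n, v n *
    Complex.exp (-(2 * Real.pi * Complex.I * ((f : ℕ) : ℂ) * ((n : ℕ) : ℂ))
      / ((N : ℕ) : ℂ))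

noncomputable def zeta (N : ℕ) : ℂ := Complex.exp (2 * Real.pi * Complex.I / N)

lemma exp_eq_zeta (N : ℕ) (a : ℤ) :
    Complex.exp (2 * Real.pi * Complex.I * (a : ℂ) / N) = zeta N ^ a := by
  rw [zeta, ← Complex.exp_int_mul]
  congr 1
  ring

lemma zeta_pow_N (N : ℕ) (hN : 0 < N) : zeta N ^ (N : ℤ) = 1 := by
  have := (Complex.isPrimitiveRoot_exp N hN.ne').pow_eq_one
  rw [zeta, zpow_natCast]; exact this

lemma zeta_congr (N : ℕ) (hN : 0 < N) {a b : ℤ} (h : a % (N:ℤ) = b % (N:ℤ)) :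
    zeta N ^ a = zeta N ^ b := by
  obtain ⟨t, ht⟩ := (Int.ModEq.dvd (h : a ≡ b [ZMOD (N:ℤ)]))
  have : a = b + (N:ℤ) * (-t) := by linarith
  rw [this, zpow_add₀, zpow_mul, zeta_pow_N N hN, one_zpow, mul_one]
  · exact Complex.exp_ne_zero _

lemma sum_zeta (N : ℕ) (hN : 0 < N) (d : ℤ) :
    ∑ f : Fin N, zeta N ^ (((f:ℕ):ℤ) * d) = if (N:ℤ) ∣ d then (N:ℂ) else 0 := by
  have hrw : ∀ f : Fin N, zeta N ^ (((f:ℕ):ℤ) * d) = (zeta N ^ d) ^ ((f:ℕ)) := by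
    intro f
    rw [mul_comm, zpow_mul, zpow_natCast]
  rw [Finset.sum_congr rfl fun f _ => hrw f]
  by_cases h : (N:ℤ) ∣ d
  · have h1 : zeta N ^ d = 1 := by
      obtain ⟨t, rfl⟩ := h
      rw [zpow_mul, zeta_pow_N N hN, one_zpow]
    simp [h, h1]
  · have hne : zeta N ^ d ≠ 1 := fun h1 =>
      h (((Complex.isPrimitiveRoot_exp N hN.ne').zpow_eq_one_iff_dvd d).mp h1)
    rw [Fin.sum_univ_eq_sum_range (fun i => (zeta N ^ d) ^ i), geom_sum_eq hne]
    have hpow : (zeta N ^ d) ^ N = 1 := by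
      rw [← zpow_natCast, ← zpow_mul, mul_comm, zpow_mul, zeta_pow_N N hN, one_zpow]
    simp [h, hpow]

lemma fin_sub_emod (N : ℕ) (a b : Fin N) :
    (((a - b : Fin N) : ℕ) : ℤ) ≡ (((a:ℕ):ℤ) - ((b:ℕ):ℤ)) [ZMOD (N:ℤ)] := by
  show _ % _ = _ % _
  rw [Fin.sub_def]
  simp only []
  have hb : (b:ℕ) ≤ N := le_of_lt b.isLt
  push_cast [Nat.cast_sub hb]
  rw [Int.emod_emod_of_dvd _ dvd_rfl]
  have : ((N:ℤ) - b + a) = ((a:ℤ) - b) + (N:ℤ) * 1 := by ring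
  rw [this, Int.add_mul_emod_self_left]

lemma dvd_iff_eq (N : ℕ) (hN : 0 < N) (n m p : Fin N) :
    (N:ℤ) ∣ (((n:ℕ):ℤ) - ((m:ℕ):ℤ) - ((p:ℕ):ℤ)) ↔ p = n - m := by
  have h1 : ((((n - m : Fin N):ℕ):ℤ)) ≡ (((n:ℕ):ℤ) - ((m:ℕ):ℤ)) [ZMOD (N:ℤ)] :=
    fin_sub_emod N n m
  constructor
  · intro h
    have h3 : ((((n - m : Fin N):ℕ):ℤ) - p) ≡ ((((n:ℕ):ℤ) - m) - p) [ZMOD (N:ℤ)] :=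
      h1.sub_right _
    have h4 : ((((n - m : Fin N):ℕ):ℤ) - p) ≡ 0 [ZMOD (N:ℤ)] :=
      h3.trans ((Int.modEq_zero_iff_dvd).mpr h)
    have h5 : (N:ℤ) ∣ ((((n - m : Fin N):ℕ):ℤ) - p) := (Int.modEq_zero_iff_dvd).mp h4
    have h6 : ((((n - m : Fin N):ℕ):ℤ) - p) = 0 := by
      refine Int.eq_zero_of_abs_lt_dvd h5 ?_
      have := (n - m : Fin N).isLt
      have := p.isLt
      rw [abs_lt]
      omega
    have : ((n - m : Fin N):ℕ) = (p:ℕ) := by omega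
    exact (Fin.ext this).symm
  · rintro rfl
    have := h1.dvd
    convert this using 1

/-- ESP synthesis over the time-shift index as a frequency-shifted
    convolution in the Fourier domain. -/
theorem esp_synthesis_fourier (N L : ℕ) (hN : 0 < N) (hL : 0 < L)
    (e : Fin L → Fin N → ℂ) (c : Fin N → ℂ) (l : Fin L) (k : Fin N)
    (n : Fin N) :
    ∑ m : Fin N, c m * espVec (e l) k m n =
      (1 / ((N : ℕ) : ℂ)) * ∑ f : Fin N,
        dft c f * dft (e l) (f - k) *
          Complex.exp (2 * Real.pi * Complex.I * ((f : ℕ) : ℂ) * ((n : ℕ) : ℂ)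
            / ((N : ℕ) : ℂ)) := by
  have hz : zeta N ≠ 0 := Complex.exp_ne_zero _
  have hNC : ((N:ℕ):ℂ) ≠ 0 := Nat.cast_ne_zero.mpr hN.ne'
  -- Step 1: rewrite each summand of RHS inner sum as a double sum of zeta powers
  have key : ∀ f : Fin N,
      dft c f * dft (e l) (f - k) *
        Complex.exp (2 * Real.pi * Complex.I * ((f : ℕ) : ℂ) * ((n : ℕ) : ℂ)
          / ((N : ℕ) : ℂ))
      = ∑ m : Fin N, ∑ p : Fin N,
          c m * e l p * zeta N ^ ((k:ℤ) * (p:ℤ))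
            * zeta N ^ ((f:ℤ) * (((n:ℕ):ℤ) - ((m:ℕ):ℤ) - ((p:ℕ):ℤ))) := by
    intro f
    have hdc : dft c f = ∑ m : Fin N, c m * zeta N ^ (-(((f:ℕ):ℤ) * ((m:ℕ):ℤ))) := by
      unfold dft
      refine Finset.sum_congr rfl fun m _ => ?_
      rw [← exp_eq_zeta]
      congr 2
      push_cast
      ring
    have hde : dft (e l) (f - k) =
        ∑ p : Fin N, e l p * zeta N ^ (-((((f:ℕ):ℤ) - ((k:ℕ):ℤ)) * ((p:ℕ):ℤ))) := by
      unfold dft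
      refine Finset.sum_congr rfl fun p _ => ?_
      rw [← zeta_congr N hN (a := -((((f - k : Fin N):ℕ):ℤ) * ((p:ℕ):ℤ)))
        (b := -((((f:ℕ):ℤ) - ((k:ℕ):ℤ)) * ((p:ℕ):ℤ)))
        (((fin_sub_emod N f k).mul_right _).neg), ← exp_eq_zeta]
      congr 2
      push_cast
      ring
    have hx : Complex.exp (2 * Real.pi * Complex.I * ((f : ℕ) : ℂ) * ((n : ℕ) : ℂ)
          / ((N : ℕ) : ℂ)) = zeta N ^ (((f:ℕ):ℤ) * ((n:ℕ):ℤ)) := by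
      rw [← exp_eq_zeta]
      congr 2
      push_cast
      ring
    rw [hdc, hde, hx, Finset.sum_mul_sum, Finset.sum_mul]
    refine Finset.sum_congr rfl fun m _ => ?_
    rw [Finset.sum_mul]
    refine Finset.sum_congr rfl fun p _ => ?_
    have harith : (-(((f:ℕ):ℤ) * ((m:ℕ):ℤ))) + (-((((f:ℕ):ℤ) - ((k:ℕ):ℤ)) * ((p:ℕ):ℤ)))
        + (((f:ℕ):ℤ) * ((n:ℕ):ℤ))
        = ((k:ℤ) * (p:ℤ)) + ((f:ℤ) * (((n:ℕ):ℤ) - ((m:ℕ):ℤ) - ((p:ℕ):ℤ))) := by ring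
    calc c m * zeta N ^ (-(((f:ℕ):ℤ) * ((m:ℕ):ℤ)))
          * (e l p * zeta N ^ (-((((f:ℕ):ℤ) - ((k:ℕ):ℤ)) * ((p:ℕ):ℤ))))
          * zeta N ^ (((f:ℕ):ℤ) * ((n:ℕ):ℤ))
        = c m * e l p * zeta N ^ ((-(((f:ℕ):ℤ) * ((m:ℕ):ℤ)))
            + (-((((f:ℕ):ℤ) - ((k:ℕ):ℤ)) * ((p:ℕ):ℤ))) + (((f:ℕ):ℤ) * ((n:ℕ):ℤ))) := by
          rw [zpow_add₀ hz, zpow_add₀ hz]; ring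
      _ = _ := by rw [harith, zpow_add₀ hz]; ring
  -- Step 2: rewrite RHS and swap sums
  rw [Finset.sum_congr rfl fun f _ => key f]
  rw [Finset.sum_comm]
  have step3 : ∀ m : Fin N,
      ∑ f : Fin N, ∑ p : Fin N,
          c m * e l p * zeta N ^ ((k:ℤ) * (p:ℤ))
            * zeta N ^ ((f:ℤ) * (((n:ℕ):ℤ) - ((m:ℕ):ℤ) - ((p:ℕ):ℤ)))
      = (N:ℂ) * (c m * e l (n - m) * zeta N ^ ((k:ℤ) * (((n - m : Fin N):ℕ):ℤ))) := by
    intro m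
    rw [Finset.sum_comm]
    have hp : ∀ p : Fin N,
        ∑ f : Fin N, c m * e l p * zeta N ^ ((k:ℤ) * (p:ℤ))
            * zeta N ^ ((f:ℤ) * (((n:ℕ):ℤ) - ((m:ℕ):ℤ) - ((p:ℕ):ℤ)))
        = c m * e l p * zeta N ^ ((k:ℤ) * (p:ℤ))
            * (if (N:ℤ) ∣ (((n:ℕ):ℤ) - ((m:ℕ):ℤ) - ((p:ℕ):ℤ)) then (N:ℂ) else 0) := by
      intro p
      rw [← Finset.mul_sum, sum_zeta N hN]
    rw [Finset.sum_congr rfl fun p _ => hp p]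
    rw [Finset.sum_eq_single (n - m)]
    · rw [if_pos ((dvd_iff_eq N hN n m (n - m)).mpr rfl)]
      ring
    · intro p _ hne
      rw [if_neg (fun h => hne ((dvd_iff_eq N hN n m p).mp h)), mul_zero]
    · intro h
      exact absurd (Finset.mem_univ _) h
  rw [Finset.sum_congr rfl fun m _ => step3 m, ← Finset.mul_sum]
  rw [← mul_assoc, one_div, inv_mul_cancel₀ hNC, one_mul]
  -- Step 4: identify with LHS
  refine Finset.sum_congr rfl fun m _ => ?_
  unfold espVec
  rw [zeta_congr N hN (a := (k:ℤ) * (((n - m : Fin N):ℕ):ℤ))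
      (b := (k:ℤ) * (((n:ℕ):ℤ) - ((m:ℕ):ℤ)))
      ((fin_sub_emod N n m).mul_left _), ← exp_eq_zeta]
  rw [show (2 * Real.pi * Complex.I * ((((k:ℤ) * (((n:ℕ):ℤ) - ((m:ℕ):ℤ))) : ℤ) : ℂ) / N)
      = (2 * Real.pi * Complex.I * ((k : ℕ) : ℂ) *
        (((((n : ℕ) : ℤ) - ((m : ℕ) : ℤ)) : ℤ) : ℂ) / ((N : ℕ) : ℂ)) from by push_cast; ring]
  ring
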